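/- Let H be an RKHS on X ⊆ ℝⁿ with a C₃-Lipschitz kernel map x ↦ k_x, and let c₂' satisfy |c₂'(z₁,w₁) − c₂'(z₂,w₂)| ≤ C₁ L_{p₁}(z₁,z₂)(‖z₁−z₂‖ + |w₁−w₂|) where L_p(z₁,z₂) = max{1,‖z₁‖,‖z₂‖}^{p−1}. Fix f ∈ H with ‖f‖_H ≤ B. Then there exists a constant C (depending on C₁, C₃, B, β_X := sup_x ‖k_x‖_H/max{1,‖x‖}) such that for every unit vector d ∈ H and all z₁ = (x₁,y₁), z₂ = (x₂,y₂) ∈ Z: |⟨c₂'(z₁, f(x₁))k_{x₁} − c₂'(z₂, f(x₂))k_{x₂}, d⟩| ≤ C · L_{p₁+1}(z₁, z₂) · ‖z₁ − z₂‖. -/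
import Mathlib


open scoped RealInnerProductSpace

set_option maxHeartbeats 1000000

/-- The map `z ↦ c₂'(z, f(x)) k_x` is locally Lipschitz of growth order `p₁ + 1` in `z`,
uniformly over unit test directions `d`: there is a constant `C` with
`|⟪c₂'(z₁,f(x₁))k_{x₁} - c₂'(z₂,f(x₂))k_{x₂}, d⟫| ≤ C ⬝ L_{p₁+1}(z₁,z₂) ⬝ ‖z₁ - z₂‖`,
where `L_p(z₁,z₂) = max{1,‖z₁‖,‖z₂‖}^{p-1}` and the evaluation is `f(x) = ⟪f, k x⟫`. -/
theorem stmt_16 {H X Y : Type*} [NormedAddCommGroup H] [InnerProductSpace ℝ H]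
    [NormedAddCommGroup X] [NormedAddCommGroup Y]
    (k : X → H) (C₁ C₃ βX B p₁ : ℝ) (hp₁ : 1 ≤ p₁) (hC₁ : 0 ≤ C₁) (hC₃ : 0 ≤ C₃)
    (hk : ∀ x₁ x₂ : X, ‖k x₁ - k x₂‖ ≤ C₃ * ‖x₁ - x₂‖)
    (hkb : ∀ x : X, ‖k x‖ ≤ βX * max 1 ‖x‖)
    (c' : X × Y → ℝ → ℝ)
    (hc' : ∀ z₁ z₂ : X × Y, ∀ w₁ w₂ : ℝ,
      |c' z₁ w₁ - c' z₂ w₂| ≤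
        C₁ * max 1 (max ‖z₁‖ ‖z₂‖) ^ (p₁ - 1) * (‖z₁ - z₂‖ + |w₁ - w₂|))
    (f : H) (hf : ‖f‖ ≤ B) :
    ∃ C : ℝ, ∀ d : H, ‖d‖ = 1 → ∀ z₁ z₂ : X × Y,
      |⟪c' z₁ ⟪f, k z₁.1⟫ • k z₁.1 - c' z₂ ⟪f, k z₂.1⟫ • k z₂.1, d⟫| ≤
        C * max 1 (max ‖z₁‖ ‖z₂‖) ^ ((p₁ + 1) - 1) * ‖z₁ - z₂‖ := by
  obtain hE | hN := isEmpty_or_nonempty (X × Y)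
  · exact ⟨0, fun d _ z₁ => (hE.false z₁).elim⟩
  obtain ⟨z₀⟩ := hN
  have hB : (0:ℝ) ≤ B := le_trans (norm_nonneg f) hf
  have hβ : (0:ℝ) ≤ βX := by
    have h1 := hkb z₀.1
    have h2 : (1:ℝ) ≤ max 1 ‖z₀.1‖ := le_max_left _ _
    nlinarith [norm_nonneg (k z₀.1)]
  set q := p₁ - 1 with hq
  have hq0 : (0:ℝ) ≤ q := by rw [hq]; linarith
  set N₀ := max 1 ‖z₀‖ with hN₀def
  have hN₀ : (1:ℝ) ≤ N₀ := le_max_left _ _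
  have hN₀q : (0:ℝ) ≤ N₀ ^ q := Real.rpow_nonneg (by linarith) q
  set A₀ := |c' z₀ 0| with hA₀def
  have hA₀ : (0:ℝ) ≤ A₀ := abs_nonneg _
  have hfac : (0:ℝ) ≤ 1 + ‖z₀‖ + B * βX := by
    have := norm_nonneg z₀; nlinarith
  set K₁ := A₀ + C₁ * N₀ ^ q * (1 + ‖z₀‖ + B * βX) with hK₁def
  have hK₁ : (0:ℝ) ≤ K₁ := by
    rw [hK₁def]
    have : 0 ≤ C₁ * N₀ ^ q * (1 + ‖z₀‖ + B * βX) :=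
      mul_nonneg (mul_nonneg hC₁ hN₀q) hfac
    linarith
  refine ⟨K₁ * C₃ + C₁ * (1 + B * C₃) * βX, ?_⟩
  intro d hd z₁ z₂
  set m := max 1 (max ‖z₁‖ ‖z₂‖) with hmdef
  have hm1 : (1:ℝ) ≤ m := le_max_left _ _
  have hm0 : (0:ℝ) < m := lt_of_lt_of_le one_pos hm1
  have hmq1 : (1:ℝ) ≤ m ^ q := Real.one_le_rpow hm1 hq0
  have hmq0 : (0:ℝ) ≤ m ^ q := by linarith
  have hz1m : ‖z₁‖ ≤ m := le_trans (le_max_left _ _) (le_max_right _ _)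
  have hz2m : ‖z₂‖ ≤ m := le_trans (le_max_right _ _) (le_max_right _ _)
  -- evaluation bound
  have hfx : ∀ z : X × Y, ‖z‖ ≤ m → |⟪f, k z.1⟫| ≤ B * βX * m := by
    intro z hz
    have h1 : |⟪f, k z.1⟫| ≤ ‖f‖ * ‖k z.1‖ := abs_real_inner_le_norm f (k z.1)
    have h3 : max 1 ‖z.1‖ ≤ m := max_le hm1 (le_trans (norm_fst_le z) hz)
    calc |⟪f, k z.1⟫| ≤ ‖f‖ * ‖k z.1‖ := h1
      _ ≤ B * (βX * m) :=
        mul_le_mul hf (le_trans (hkb z.1) (mul_le_mul_of_nonneg_left h3 hβ))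
          (norm_nonneg _) hB
      _ = B * βX * m := by ring
  -- value bound on c'
  have hcb : ∀ z : X × Y, ‖z‖ ≤ m → |c' z ⟪f, k z.1⟫| ≤ K₁ * m ^ q * m := by
    intro z hz
    have hw := hfx z hz
    have hdiff := hc' z z₀ ⟪f, k z.1⟫ 0
    have hM : max 1 (max ‖z‖ ‖z₀‖) ≤ m * N₀ := by
      have h1 : ‖z‖ ≤ m * N₀ := le_trans hz (le_mul_of_one_le_right (le_of_lt hm0) hN₀)
      have h2 : ‖z₀‖ ≤ m * N₀ := by
        have : ‖z₀‖ ≤ N₀ := le_max_right _ _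
        nlinarith [norm_nonneg z₀]
      exact max_le (by nlinarith) (max_le h1 h2)
    have hMr : max 1 (max ‖z‖ ‖z₀‖) ^ q ≤ m ^ q * N₀ ^ q := by
      calc max 1 (max ‖z‖ ‖z₀‖) ^ q ≤ (m * N₀) ^ q :=
            Real.rpow_le_rpow (le_trans zero_le_one (le_max_left _ _)) hM hq0
        _ = m ^ q * N₀ ^ q := Real.mul_rpow (le_of_lt hm0) (by linarith)
    have hS : ‖z - z₀‖ + |⟪f, k z.1⟫ - 0| ≤ (1 + ‖z₀‖ + B * βX) * m := by
      have h1 : ‖z - z₀‖ ≤ ‖z‖ + ‖z₀‖ := norm_sub_le _ _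
      have h2 : ‖z₀‖ ≤ ‖z₀‖ * m := le_mul_of_one_le_right (norm_nonneg _) hm1
      rw [sub_zero]
      nlinarith
    have key : |c' z ⟪f, k z.1⟫ - c' z₀ 0| ≤
        C₁ * (m ^ q * N₀ ^ q) * ((1 + ‖z₀‖ + B * βX) * m) := by
      refine le_trans hdiff ?_
      have h0 : 0 ≤ ‖z - z₀‖ + |⟪f, k z.1⟫ - 0| := by positivity
      exact mul_le_mul (mul_le_mul_of_nonneg_left hMr hC₁) hS h0
        (mul_nonneg hC₁ (mul_nonneg hmq0 hN₀q))
    have habs : |c' z ⟪f, k z.1⟫| ≤ A₀ + |c' z ⟪f, k z.1⟫ - c' z₀ 0| := by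
      calc |c' z ⟪f, k z.1⟫| = |c' z₀ 0 + (c' z ⟪f, k z.1⟫ - c' z₀ 0)| := by
            congr 1; ring
        _ ≤ A₀ + |c' z ⟪f, k z.1⟫ - c' z₀ 0| := abs_add_le _ _
    have h1le : (1:ℝ) ≤ m ^ q * m := by
      calc (1:ℝ) = 1 * 1 := by ring
        _ ≤ m ^ q * m := mul_le_mul hmq1 hm1 zero_le_one hmq0
    calc |c' z ⟪f, k z.1⟫|
        ≤ A₀ + C₁ * (m ^ q * N₀ ^ q) * ((1 + ‖z₀‖ + B * βX) * m) := by
          linarith [habs, key]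
      _ = A₀ + (C₁ * N₀ ^ q * (1 + ‖z₀‖ + B * βX)) * (m ^ q * m) := by ring
      _ ≤ A₀ * (m ^ q * m) + (C₁ * N₀ ^ q * (1 + ‖z₀‖ + B * βX)) * (m ^ q * m) := by
          have := le_mul_of_one_le_right hA₀ h1le; linarith
      _ = K₁ * m ^ q * m := by rw [hK₁def]; ring
  -- difference bounds
  have hΔx : ‖z₁.1 - z₂.1‖ ≤ ‖z₁ - z₂‖ := norm_fst_le (z₁ - z₂)
  have hkk : ‖k z₁.1 - k z₂.1‖ ≤ C₃ * ‖z₁ - z₂‖ :=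
    le_trans (hk _ _) (mul_le_mul_of_nonneg_left hΔx hC₃)
  have hww : |⟪f, k z₁.1⟫ - ⟪f, k z₂.1⟫| ≤ B * C₃ * ‖z₁ - z₂‖ := by
    have h1 : ⟪f, k z₁.1⟫ - ⟪f, k z₂.1⟫ = ⟪f, k z₁.1 - k z₂.1⟫ :=
      (inner_sub_right f (k z₁.1) (k z₂.1)).symm
    rw [h1]
    calc |⟪f, k z₁.1 - k z₂.1⟫| ≤ ‖f‖ * ‖k z₁.1 - k z₂.1‖ := abs_real_inner_le_norm _ _
      _ ≤ B * (C₃ * ‖z₁ - z₂‖) := mul_le_mul hf hkk (norm_nonneg _) hB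
      _ = B * C₃ * ‖z₁ - z₂‖ := by ring
  have hc12 : |c' z₁ ⟪f, k z₁.1⟫ - c' z₂ ⟪f, k z₂.1⟫| ≤
      C₁ * m ^ q * ((1 + B * C₃) * ‖z₁ - z₂‖) := by
    have h := hc' z₁ z₂ ⟪f, k z₁.1⟫ ⟪f, k z₂.1⟫
    rw [← hmdef] at h
    refine le_trans h ?_
    have h2 : ‖z₁ - z₂‖ + |⟪f, k z₁.1⟫ - ⟪f, k z₂.1⟫| ≤ (1 + B * C₃) * ‖z₁ - z₂‖ := by
      nlinarith
    exact mul_le_mul_of_nonneg_left h2 (mul_nonneg hC₁ hmq0)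
  have hk2 : ‖k z₂.1‖ ≤ βX * m :=
    le_trans (hkb z₂.1)
      (mul_le_mul_of_nonneg_left (max_le hm1 (le_trans (norm_fst_le z₂) hz2m)) hβ)
  have hc1 := hcb z₁ hz1m
  -- put it together
  have hsplit : c' z₁ ⟪f, k z₁.1⟫ • k z₁.1 - c' z₂ ⟪f, k z₂.1⟫ • k z₂.1
      = c' z₁ ⟪f, k z₁.1⟫ • (k z₁.1 - k z₂.1)
        + (c' z₁ ⟪f, k z₁.1⟫ - c' z₂ ⟪f, k z₂.1⟫) • k z₂.1 := by
    rw [smul_sub, sub_smul]; abel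
  have hnorm : ‖c' z₁ ⟪f, k z₁.1⟫ • k z₁.1 - c' z₂ ⟪f, k z₂.1⟫ • k z₂.1‖ ≤
      |c' z₁ ⟪f, k z₁.1⟫| * ‖k z₁.1 - k z₂.1‖
      + |c' z₁ ⟪f, k z₁.1⟫ - c' z₂ ⟪f, k z₂.1⟫| * ‖k z₂.1‖ := by
    rw [hsplit]
    refine le_trans (norm_add_le _ _) ?_
    rw [norm_smul, norm_smul, Real.norm_eq_abs, Real.norm_eq_abs]
  have hpow : m ^ ((p₁ + 1) - 1) = m ^ q * m := by
    rw [show (p₁ + 1) - 1 = q + 1 by rw [hq]; ring, Real.rpow_add hm0, Real.rpow_one]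
  calc |⟪c' z₁ ⟪f, k z₁.1⟫ • k z₁.1 - c' z₂ ⟪f, k z₂.1⟫ • k z₂.1, d⟫|
      ≤ ‖c' z₁ ⟪f, k z₁.1⟫ • k z₁.1 - c' z₂ ⟪f, k z₂.1⟫ • k z₂.1‖ * ‖d‖ :=
        abs_real_inner_le_norm _ _
    _ = ‖c' z₁ ⟪f, k z₁.1⟫ • k z₁.1 - c' z₂ ⟪f, k z₂.1⟫ • k z₂.1‖ := by
        rw [hd, mul_one]
    _ ≤ |c' z₁ ⟪f, k z₁.1⟫| * ‖k z₁.1 - k z₂.1‖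
        + |c' z₁ ⟪f, k z₁.1⟫ - c' z₂ ⟪f, k z₂.1⟫| * ‖k z₂.1‖ := hnorm
    _ ≤ (K₁ * m ^ q * m) * (C₃ * ‖z₁ - z₂‖)
        + (C₁ * m ^ q * ((1 + B * C₃) * ‖z₁ - z₂‖)) * (βX * m) := by
        refine add_le_add ?_ ?_
        · exact mul_le_mul hc1 hkk (norm_nonneg _)
            (mul_nonneg (mul_nonneg hK₁ hmq0) (le_of_lt hm0))
        · exact mul_le_mul hc12 hk2 (norm_nonneg _)
            (mul_nonneg (mul_nonneg hC₁ hmq0)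
              (mul_nonneg (by nlinarith) (norm_nonneg _)))
    _ = (K₁ * C₃ + C₁ * (1 + B * C₃) * βX) * (m ^ q * m) * ‖z₁ - z₂‖ := by ring
    _ = (K₁ * C₃ + C₁ * (1 + B * C₃) * βX) * m ^ ((p₁ + 1) - 1) * ‖z₁ - z₂‖ := by
        rw [hpow]
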